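/- If X is a compact metric space and f : X → X is a positively expansive homeomorphism (i.e., there exists c > 0 such that for all distinct x, y in X there is some n ≥ 0 with dist(f^n x, f^n y) > c), then X is finite. -/
import Mathlib


theorem stmt_0 {X : Type*} [MetricSpace X] [CompactSpace X]
    (f : X ≃ₜ X) (c : ℝ) (hc : 0 < c)
    (hexp : ∀ x y : X, x ≠ y → ∃ n : ℕ, c < dist ((f : X → X)^[n] x) ((f : X → X)^[n] y)) :
    Finite X := by
  classical
  set F : X → X := (f : X → X) with hFdef
  set G : X → X := (f.symm : X → X) with hGdef
  have hFG : ∀ z, F (G z) = z := fun z => f.apply_symm_apply z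
  have hGF : ∀ z, G (F z) = z := fun z => f.symm_apply_apply z
  have hFGk : ∀ (k : ℕ) (z : X), F^[k] (G^[k] z) = z := by
    intro k
    induction k with
    | zero => intro z; simp
    | succ n ih =>
      intro z
      rw [Function.iterate_succ_apply, Function.iterate_succ_apply' G, hFG]
      exact ih z
  have hGFk : ∀ (k : ℕ) (z : X), G^[k] (F^[k] z) = z := by
    intro k
    induction k with
    | zero => intro z; simp
    | succ n ih =>
      intro z
      rw [Function.iterate_succ_apply, Function.iterate_succ_apply' F, hGF]
      exact ih z
  have hFcont : Continuous F := f.continuous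
  -- Lemma A : uniform expansiveness
  have lemA : ∀ δ > (0:ℝ), ∃ N : ℕ, ∀ x y : X,
      (∀ n ≤ N, dist (F^[n] x) (F^[n] y) ≤ c) → dist x y ≤ δ := by
    intro δ hδ
    by_contra h
    push_neg at h
    set K : ℕ → Set (X × X) := fun N =>
      {p | (∀ n ≤ N, dist (F^[n] p.1) (F^[n] p.2) ≤ c) ∧ δ ≤ dist p.1 p.2} with hKdef
    have hclosed : ∀ N, IsClosed (K N) := by
      intro N
      have h1 : IsClosed {p : X × X | ∀ n ≤ N, dist (F^[n] p.1) (F^[n] p.2) ≤ c} := by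
        have he : {p : X × X | ∀ n ≤ N, dist (F^[n] p.1) (F^[n] p.2) ≤ c}
            = ⋂ n, ⋂ _ : n ≤ N, {p : X × X | dist (F^[n] p.1) (F^[n] p.2) ≤ c} := by
          ext p; simp
        rw [he]
        exact isClosed_iInter fun n => isClosed_iInter fun _ =>
          isClosed_le (Continuous.dist ((hFcont.iterate n).comp continuous_fst)
            ((hFcont.iterate n).comp continuous_snd)) continuous_const
      have h2 : IsClosed {p : X × X | δ ≤ dist p.1 p.2} :=
        isClosed_le continuous_const (continuous_fst.dist continuous_snd)
      exact h1.inter h2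
    have hne : ∀ N, (K N).Nonempty := by
      intro N
      obtain ⟨x, y, hxy, hd⟩ := h N
      exact ⟨(x, y), hxy, le_of_lt hd⟩
    have hanti : ∀ N, K (N + 1) ⊆ K N := by
      intro N p hp
      exact ⟨fun n hn => hp.1 n (hn.trans (Nat.le_succ N)), hp.2⟩
    have hcpt : IsCompact (K 0) := (hclosed 0).isCompact
    obtain ⟨p, hp⟩ := IsCompact.nonempty_iInter_of_sequence_nonempty_isCompact_isClosed
      K hanti hne hcpt hclosed
    have hpall : ∀ N, p ∈ K N := Set.mem_iInter.1 hp
    have hne' : p.1 ≠ p.2 := by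
      intro hEq
      have := (hpall 0).2
      rw [hEq] at this
      simp at this
      linarith
    obtain ⟨n, hn⟩ := hexp p.1 p.2 hne'
    exact absurd hn (not_lt.2 ((hpall n).1 n le_rfl))
  -- uniform continuity of G
  have hGuc : UniformContinuous G :=
    CompactSpace.uniformContinuous_of_continuous f.symm.continuous
  obtain ⟨ε₀, hε₀, hε₀'⟩ := Metric.uniformContinuous_iff.1 hGuc c hc
  set ε : ℝ := min (ε₀ / 2) c with hεdef
  have hεpos : 0 < ε := lt_min (by linarith) hc
  have hεc : ε ≤ c := min_le_right _ _
  have hεG : ∀ x y : X, dist x y ≤ ε → dist (G x) (G y) ≤ c := by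
    intro x y h
    have : dist x y < ε₀ := lt_of_le_of_lt (h.trans (min_le_left _ _)) (by linarith)
    exact le_of_lt (hε₀' this)
  obtain ⟨N, hN⟩ := lemA ε hεpos
  -- step property preserved by G
  have hPG : ∀ x y : X, (∀ n ≤ N, dist (F^[n] x) (F^[n] y) ≤ c) →
      ∀ n ≤ N, dist (F^[n] (G x)) (F^[n] (G y)) ≤ c := by
    intro x y hP n hn
    cases n with
    | zero => simpa using hεG x y (hN x y hP)
    | succ m =>
      rw [Function.iterate_succ_apply, Function.iterate_succ_apply, hFG, hFG]
      exact hP m ((Nat.le_succ m).trans hn)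
  have hPGk : ∀ (k : ℕ) (x y : X), (∀ n ≤ N, dist (F^[n] x) (F^[n] y) ≤ c) →
      ∀ n ≤ N, dist (F^[n] (G^[k] x)) (F^[n] (G^[k] y)) ≤ c := by
    intro k
    induction k with
    | zero => intro x y hP; simpa using hP
    | succ m ih =>
      intro x y hP
      rw [Function.iterate_succ_apply' G, Function.iterate_succ_apply' G]
      exact hPG _ _ (ih x y hP)
  -- key contraction lemma
  have key : ∀ δ > (0:ℝ), ∃ Kn : ℕ, ∀ x y : X,
      (∀ n ≤ N, dist (F^[n] x) (F^[n] y) ≤ c) → dist (G^[Kn] x) (G^[Kn] y) ≤ δ := by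
    intro δ hδ
    obtain ⟨N', hN'⟩ := lemA δ hδ
    refine ⟨N', fun x y hP => hN' _ _ ?_⟩
    intro n hn
    have hid : ∀ z : X, F^[n] (G^[N'] z) = G^[N' - n] z := by
      intro z
      have h1 : G^[N'] z = G^[n] (G^[N' - n] z) := by
        rw [← Function.iterate_add_apply]
        congr 1
        omega
      rw [h1, hFGk]
    rw [hid, hid]
    exact (hN _ _ (hPGk (N' - n) x y hP)).trans hεc
  -- uniform continuity gives a radius ρ ensuring the N-step property
  have cover : ∃ ρ > (0:ℝ), ∀ x y : X, dist x y ≤ ρ →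
      ∀ n ≤ N, dist (F^[n] x) (F^[n] y) ≤ c := by
    have hgen : ∀ M : ℕ, ∃ ρ > (0:ℝ), ∀ x y : X, dist x y ≤ ρ →
        ∀ n ≤ M, dist (F^[n] x) (F^[n] y) ≤ c := by
      intro M
      induction M with
      | zero =>
        refine ⟨c, hc, fun x y h n hn => ?_⟩
        interval_cases n
        simpa using h
      | succ m ih =>
        obtain ⟨ρ, hρpos, hρ⟩ := ih
        have huc : UniformContinuous (F^[m + 1]) :=
          CompactSpace.uniformContinuous_of_continuous (hFcont.iterate _)
        obtain ⟨ρ₂, hρ₂pos, hρ₂⟩ := Metric.uniformContinuous_iff.1 huc c hc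
        refine ⟨min ρ (ρ₂ / 2), lt_min hρpos (by linarith), fun x y h n hn => ?_⟩
        by_cases hcase : n ≤ m
        · exact hρ x y (h.trans (min_le_left _ _)) n hcase
        · have hn' : n = m + 1 := by omega
          subst hn'
          have : dist x y < ρ₂ := lt_of_le_of_lt (h.trans (min_le_right _ _)) (by linarith)
          exact le_of_lt (hρ₂ this)
    exact hgen N
  obtain ⟨ρ, hρpos, hρ⟩ := cover
  -- finite cover by balls of radius ρ/2
  obtain ⟨t, -, htfin, htcover⟩ :=
    (isCompact_univ (X := X)).finite_cover_balls (e := ρ / 2) (by linarith)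
  by_contra hinf
  rw [not_finite_iff_infinite] at hinf
  obtain ⟨u, hucard⟩ := Infinite.exists_subset_card_eq X (htfin.toFinset.card + 2)
  -- minimal distance among distinct points of u
  have huoff : u.offDiag.Nonempty := by
    have h2 : 1 < u.card := by omega
    obtain ⟨a, ha, b, hb, hab⟩ := Finset.one_lt_card.1 h2
    exact ⟨(a, b), Finset.mem_offDiag.2 ⟨ha, hb, hab⟩⟩
  have himne : (u.offDiag.image fun p => dist p.1 p.2).Nonempty := huoff.image _
  set m₀ : ℝ := (u.offDiag.image fun p => dist p.1 p.2).min' himne with hm₀def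
  have hm₀pos : 0 < m₀ := by
    have hmem := (u.offDiag.image fun p => dist p.1 p.2).min'_mem himne
    rw [← hm₀def] at hmem
    obtain ⟨p, hp, hpd⟩ := Finset.mem_image.1 hmem
    have : p.1 ≠ p.2 := (Finset.mem_offDiag.1 hp).2.2
    rw [← hpd]
    exact dist_pos.2 this
  obtain ⟨Kn, hKn⟩ := key (m₀ / 2) (by linarith)
  -- choose a center for each point
  have hchoice : ∀ x : X, ∃ z, z ∈ htfin.toFinset ∧ F^[Kn] x ∈ Metric.ball z (ρ / 2) := by
    intro x
    have := htcover (Set.mem_univ (F^[Kn] x))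
    simp only [Set.mem_iUnion] at this
    obtain ⟨z, hz, hzball⟩ := this
    exact ⟨z, htfin.mem_toFinset.2 hz, hzball⟩
  choose g hg1 hg2 using hchoice
  have hcardlt : htfin.toFinset.card < u.card := by omega
  obtain ⟨a, ha, b, hb, hab, hgab⟩ :=
    Finset.exists_ne_map_eq_of_card_lt_of_maps_to hcardlt (fun x _ => hg1 x)
  have hdab : dist (F^[Kn] a) (F^[Kn] b) ≤ ρ := by
    have h1 : dist (F^[Kn] a) (g a) < ρ / 2 := Metric.mem_ball.1 (hg2 a)
    have h2 : dist (F^[Kn] b) (g b) < ρ / 2 := Metric.mem_ball.1 (hg2 b)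
    rw [← hgab] at h2
    calc dist (F^[Kn] a) (F^[Kn] b)
        ≤ dist (F^[Kn] a) (g a) + dist (g a) (F^[Kn] b) := dist_triangle _ _ _
      _ = dist (F^[Kn] a) (g a) + dist (F^[Kn] b) (g a) := by rw [dist_comm (g a)]
      _ ≤ ρ := by linarith
  have hP := hρ _ _ hdab
  have hfinal := hKn _ _ hP
  rw [hGFk, hGFk] at hfinal
  have hmin : m₀ ≤ dist a b := by
    apply Finset.min'_le
    exact Finset.mem_image.2 ⟨(a, b), Finset.mem_offDiag.2 ⟨ha, hb, hab⟩, rfl⟩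
  linarith
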